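/- For N ≥ 2, the function u(x) = x_N · e^{-x₁} satisfies -Δu = -u in the upper half-space ℝ^N_+, u ≥ 0 in ℝ^N_+, and u = 0 on the boundary {x_N = 0}. In particular, u is positive in ℝ^N_+ and not one-dimensional (it depends nontrivially on x₁). -/

import Mathlib

open Set Filter

/-- The Laplacian of `u : ℝ^N → ℝ`, as the sum of the second partial derivatives. -/
noncomputable def lap {N : ℕ} (u : EuclideanSpace ℝ (Fin N) → ℝ)
    (x : EuclideanSpace ℝ (Fin N)) : ℝ :=
  ∑ i, fderiv ℝ (fun y => fderiv ℝ u y (EuclideanSpace.single i 1)) x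
    (EuclideanSpace.single i 1)

noncomputable abbrev prCLM {N : ℕ} (i : Fin N) : EuclideanSpace ℝ (Fin N) →L[ℝ] ℝ :=
  EuclideanSpace.proj i

lemma keyDeriv {N : ℕ} (fst lst : Fin N) (a b : ℝ) (x : EuclideanSpace ℝ (Fin N)) :
    HasFDerivAt (fun y : EuclideanSpace ℝ (Fin N) => (a + b * y lst) * Real.exp (-(y fst)))
      ((a + b * x lst) • (Real.exp (-(x fst)) • (-(prCLM fst))) +
        Real.exp (-(x fst)) • (b • prCLM lst)) x := by
  have h1 : HasFDerivAt (fun y : EuclideanSpace ℝ (Fin N) => a + b * y lst)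
      (b • prCLM lst) x := ((prCLM lst).hasFDerivAt.const_mul b).const_add a
  have hin : HasFDerivAt (fun y : EuclideanSpace ℝ (Fin N) => -(y fst)) (-(prCLM fst)) x :=
    (prCLM fst).hasFDerivAt.neg
  have h2 : HasFDerivAt (fun y : EuclideanSpace ℝ (Fin N) => Real.exp (-(y fst)))
      (Real.exp (-(x fst)) • (-(prCLM fst))) x :=
    hin.exp
  exact h1.mul h2

lemma keyFD {N : ℕ} (fst lst : Fin N) (a b : ℝ) (x w : EuclideanSpace ℝ (Fin N)) :
    fderiv ℝ (fun y : EuclideanSpace ℝ (Fin N) => (a + b * y lst) * Real.exp (-(y fst))) x w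
      = Real.exp (-(x fst)) * (b * w lst - (a + b * x lst) * w fst) := by
  rw [(keyDeriv fst lst a b x).fderiv]
  simp [prCLM]
  ring

/-- For N ≥ 2, the function `u(x) = x_N · e^{-x₁}` satisfies `-Δu = -u`
in the upper half-space, `u ≥ 0` there, `u = 0` on the boundary, `u > 0` in the
half-space, and `u` is not one-dimensional (it does not depend only on `x_N`). -/
theorem stmt3 (N : ℕ) (hN : 2 ≤ N) (fst lst : Fin N)
    (hfst : (fst : ℕ) = 0) (hlst : (lst : ℕ) = N - 1)
    (u : EuclideanSpace ℝ (Fin N) → ℝ)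
    (hu : u = fun x => x lst * Real.exp (-(x fst))) :
    (∀ x : EuclideanSpace ℝ (Fin N), 0 < x lst → - lap u x = - u x) ∧
    (∀ x : EuclideanSpace ℝ (Fin N), 0 < x lst → 0 ≤ u x) ∧
    (∀ x : EuclideanSpace ℝ (Fin N), x lst = 0 → u x = 0) ∧
    (∀ x : EuclideanSpace ℝ (Fin N), 0 < x lst → 0 < u x) ∧
    ¬ (∃ g : ℝ → ℝ, ∀ x : EuclideanSpace ℝ (Fin N), 0 < x lst → u x = g (x lst)) := by
  have hne : fst ≠ lst := by
    intro h
    rw [h] at hfst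
    omega
  have hufd : ∀ (x w : EuclideanSpace ℝ (Fin N)),
      fderiv ℝ u x w = Real.exp (-(x fst)) * (w lst - x lst * w fst) := by
    intro x w
    have hu' : u = fun y : EuclideanSpace ℝ (Fin N) =>
        ((0:ℝ) + 1 * y lst) * Real.exp (-(y fst)) := by
      rw [hu]; funext y; ring
    rw [hu', keyFD fst lst 0 1 x w]; ring
  have hsecond : ∀ (i : Fin N) (x : EuclideanSpace ℝ (Fin N)),
      fderiv ℝ (fun y => fderiv ℝ u y (EuclideanSpace.single i 1)) x
        (EuclideanSpace.single i 1)
      = Real.exp (-(x fst)) *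
          ((-(EuclideanSpace.single i (1:ℝ) fst)) * EuclideanSpace.single i (1:ℝ) lst -
            (EuclideanSpace.single i (1:ℝ) lst +
              (-(EuclideanSpace.single i (1:ℝ) fst)) * x lst) *
              EuclideanSpace.single i (1:ℝ) fst) := by
    intro i x
    have hfun : (fun y => fderiv ℝ u y (EuclideanSpace.single i 1)) =
        fun y : EuclideanSpace ℝ (Fin N) =>
          (EuclideanSpace.single i (1:ℝ) lst +
            (-(EuclideanSpace.single i (1:ℝ) fst)) * y lst) * Real.exp (-(y fst)) := by
      funext y; rw [hufd]; ring
    rw [hfun, keyFD fst lst _ _ x _]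
  have hlap : ∀ x : EuclideanSpace ℝ (Fin N), lap u x = u x := by
    intro x
    have hterms : ∀ i : Fin N,
        fderiv ℝ (fun y => fderiv ℝ u y (EuclideanSpace.single i 1)) x
          (EuclideanSpace.single i 1)
        = if i = fst then x lst * Real.exp (-(x fst)) else 0 := by
      intro i
      rw [hsecond i x]
      by_cases h : i = fst
      · subst h
        simp [EuclideanSpace.single_apply, Ne.symm hne, (Ne.symm hne : lst ≠ i)]
        ring
      · simp [EuclideanSpace.single_apply, h, Ne.symm h]
    unfold lap
    rw [Finset.sum_congr rfl fun i _ => hterms i]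
    simp [hu]
  refine ⟨fun x _ => by rw [hlap], ?_, ?_, ?_, ?_⟩
  · intro x hx
    rw [hu]
    positivity
  · intro x hx
    simp [hu, hx]
  · intro x hx
    rw [hu]
    exact mul_pos hx (Real.exp_pos _)
  · rintro ⟨g, hg⟩
    set x1 : EuclideanSpace ℝ (Fin N) := EuclideanSpace.single lst 1 with hx1
    set x2 : EuclideanSpace ℝ (Fin N) :=
      EuclideanSpace.single lst 1 + EuclideanSpace.single fst 1 with hx2
    have hx1l : x1 lst = 1 := by simp [hx1, EuclideanSpace.single_apply]
    have hx1f : x1 fst = 0 := by simp [hx1, EuclideanSpace.single_apply, hne]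
    have hx2l : x2 lst = 1 := by
      simp [hx2, EuclideanSpace.single_apply, Ne.symm hne]
    have hx2f : x2 fst = 1 := by
      simp [hx2, EuclideanSpace.single_apply, hne]
    have h1 := hg x1 (by rw [hx1l]; norm_num)
    have h2 := hg x2 (by rw [hx2l]; norm_num)
    rw [hu] at h1 h2
    simp only [hx1l, hx1f, hx2l, hx2f] at h1 h2
    rw [neg_zero, Real.exp_zero, one_mul] at h1
    rw [one_mul] at h2
    have hlt : Real.exp (-(1:ℝ)) < 1 := Real.exp_lt_one_iff.mpr (by norm_num)
    rw [← h1] at h2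
    linarith
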